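/- Let T be a weighted tree with ρ > 0 under the postal model and let κ̂ be a prime broadcast center of T. Then for every vertex x ≠ κ̂, b_time(x, T) = d(x, κ̂)·ρ + w̃(x, κ̂) + b_time(κ̂, B(κ̂, x)), where d(x, κ̂) is the number of edges on the x-to-κ̂ path and w̃(x, κ̂) is the total weight of that path. -/

import Mathlib

/-!
Common definitions for the postal-model broadcasting problem on weighted trees.
-/

open SimpleGraph

namespace Postal

attribute [local instance] Classical.propDecidable

variable {V : Type*} [Fintype V] [DecidableEq V] (G : SimpleGraph V)

/-- The unique path (as a walk) between two vertices of a tree. -/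
noncomputable def tPath (hG : G.IsTree) (u v : V) : G.Walk u v :=
  (hG.existsUnique_path u v).exists.choose

/-- `z` lies in the open branch `O(x,y)`: the component of `T - x` containing `y`. -/
def inO (x y z : V) : Prop := ∃ p : G.Walk y z, x ∉ p.support

/-- The open branch `O(x,y)`. -/
def Obr (x y : V) : Set V := {z | inO G x y z}

/-- The closed branch `B(x,y) = T - O(x,y)` (it contains `x`). -/
def Bbr (x y : V) : Set V := {z | ¬ inO G x y z}

/-- The parent of `z` with respect to the root `u`: the penultimate vertex on the
unique `u`-to-`z` path. -/
noncomputable def parent (hG : G.IsTree) (u z : V) : V :=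
  (tPath G hG u z).getVert ((tPath G hG u z).length - 1)

/-- The receive time of `z` under schedule `σ` when `u` originates the message:
along the unique `u`-to-`z` path, each vertex is contacted in its slot `σ`,
contributing `σ·ρ` connection time plus the edge weight. -/
noncomputable def recvTime (hG : G.IsTree) (w : V → V → ℝ) (ρ : ℝ) (σ : V → ℕ) (u z : V) : ℝ :=
  ((tPath G hG u z).darts.map (fun d => (σ d.toProd.2 : ℝ) * ρ + w d.toProd.1 d.toProd.2)).sum

/-- A schedule `σ` is valid for source `u` broadcasting over the vertex set `S`:
every non-source vertex gets a slot `≥ 1`, and distinct vertices with the same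
parent get distinct slots (a sender contacts its neighbors sequentially). -/
def Valid (hG : G.IsTree) (σ : V → ℕ) (u : V) (S : Set V) : Prop :=
  (∀ z ∈ S, z ≠ u → 1 ≤ σ z) ∧
  (∀ z₁ ∈ S, ∀ z₂ ∈ S, z₁ ≠ u → z₂ ≠ u → z₁ ≠ z₂ →
    parent G hG u z₁ = parent G hG u z₂ → σ z₁ ≠ σ z₂)

/-- The minimum broadcast time for `u` to broadcast a message over the subtree
induced by `S` under the postal model with latency `ρ`. -/
noncomputable def bTime (hG : G.IsTree) (w : V → V → ℝ) (ρ : ℝ) (u : V) (S : Set V) : ℝ :=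
  sInf {m | ∃ σ, Valid G hG σ u S ∧ m = sSup ((recvTime G hG w ρ σ u) '' S)}

/-- Broadcast time over the whole tree. -/
noncomputable def bTimeT (hG : G.IsTree) (w : V → V → ℝ) (ρ : ℝ) (u : V) : ℝ :=
  bTime G hG w ρ u Set.univ

/-- The set of broadcast centers. -/
def BCtr (hG : G.IsTree) (w : V → V → ℝ) (ρ : ℝ) : Set V :=
  {u | ∀ v, bTimeT G hG w ρ u ≤ bTimeT G hG w ρ v}

/-- A prime broadcast center. -/
def IsPrime (hG : G.IsTree) (w : V → V → ℝ) (ρ : ℝ) (κ : V) : Prop :=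
  κ ∈ BCtr G hG w ρ ∧
  ∀ u, G.Adj κ u → bTime G hG w ρ u (Bbr G u κ) ≤ bTime G hG w ρ κ (Bbr G κ u)

/-- Hop distance: number of edges on the unique path. -/
noncomputable def hop (hG : G.IsTree) (x y : V) : ℕ := (tPath G hG x y).length

/-- Total weight of the unique `x`-to-`y` path. -/
noncomputable def pw (hG : G.IsTree) (w : V → V → ℝ) (x y : V) : ℝ :=
  ((tPath G hG x y).darts.map (fun d => w d.toProd.1 d.toProd.2)).sum

/-- Symmetric weight function. -/
def Wsymm (w : V → V → ℝ) : Prop := ∀ a b, w a b = w b a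

/-- Positive weights on edges. -/
def Wpos (w : V → V → ℝ) : Prop := ∀ a b, G.Adj a b → 0 < w a b

/-- A scenario: a symmetric weight assignment within the uncertainty intervals. -/
def Scenario (lo hi : V → V → ℝ) (w : V → V → ℝ) : Prop :=
  (∀ a b, w a b = w b a) ∧ ∀ a b, G.Adj a b → lo a b ≤ w a b ∧ w a b ≤ hi a b

/-- The maximum regret of `x`. -/
noncomputable def maxRegret (hG : G.IsTree) (lo hi : V → V → ℝ) (ρ : ℝ) (x : V) : ℝ :=
  sSup {r | ∃ w y, Scenario G lo hi w ∧ r = bTimeT G hG w ρ x - bTimeT G hG w ρ y}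

/-- `w` is a worst-case scenario of the tree with respect to `x`. -/
def WorstCase (hG : G.IsTree) (lo hi : V → V → ℝ) (ρ : ℝ) (x : V) (w : V → V → ℝ) : Prop :=
  Scenario G lo hi w ∧
  ∃ y, bTimeT G hG w ρ x - bTimeT G hG w ρ y = maxRegret G hG lo hi ρ x

/-- An edge `(a,b)` lies on the unique `x`-to-`y` path. -/
def onPath (hG : G.IsTree) (x y a b : V) : Prop :=
  a ∈ (tPath G hG x y).support ∧ b ∈ (tPath G hG x y).support

/-- The base scenario `α_{x,y}`: weight `hi` on the `x`-to-`y` path and on edges of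
`B(y,x)`, weight `lo` elsewhere. -/
noncomputable def baseScenario (hG : G.IsTree) (lo hi : V → V → ℝ) (x y : V) : V → V → ℝ :=
  fun a b =>
    if onPath G hG x y a b ∨ (a ∈ Bbr G y x ∧ b ∈ Bbr G y x) then hi a b else lo a b

/-- The value `w(y,v) + b_time(v, B(v,y))` of a neighbor `v` of `y`. -/
noncomputable def nval (hG : G.IsTree) (w : V → V → ℝ) (ρ : ℝ) (y v : V) : ℝ :=
  w y v + bTime G hG w ρ v (Bbr G v y)

/-- Scenario `β^j_{x,y}`: agrees with `α_{x,y}`, except that every edge in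
`{(y,u_k)} ∪ E(B(u_k,y))` for `k > j` (with `u` the 1-based sorted enumeration
of the neighbors of `y` in `B(y,x)`) gets weight `lo`. -/
noncomputable def betaScenario (hG : G.IsTree) (lo hi : V → V → ℝ) (x y : V) {h : ℕ}
    (u : Fin h → V) (j : ℕ) : V → V → ℝ :=
  fun a b =>
    if ∃ k : Fin h, j < (k : ℕ) + 1 ∧
        ((a = y ∧ b = u k) ∨ (b = y ∧ a = u k) ∨
          (a ∈ Bbr G (u k) y ∧ b ∈ Bbr G (u k) y)) then
      lo a b
    else baseScenario G hG lo hi x y a b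

/-- Scenario `γ^j_{x,y}`: agrees with `α_{x,y}` on the edges in
`⋃_{1 ≤ k ≤ j} ({(y,u_k)} ∪ E(B(u_k,y)))` and with the scenario `s` elsewhere. -/
noncomputable def gammaScenario (hG : G.IsTree) (lo hi : V → V → ℝ) (s : V → V → ℝ)
    (x y : V) {h : ℕ} (u : Fin h → V) (j : ℕ) : V → V → ℝ :=
  fun a b =>
    if ∃ k : Fin h, (k : ℕ) + 1 ≤ j ∧
        ((a = y ∧ b = u k) ∨ (b = y ∧ a = u k) ∨
          (a ∈ Bbr G (u k) y ∧ b ∈ Bbr G (u k) y)) then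
      baseScenario G hG lo hi x y a b
    else s a b

/-- The set of neighbors of `y` inside the branch `B(y,x)`. -/
def nbrIn (x y : V) : Set V := {v | G.Adj y v ∧ v ∈ Bbr G y x}

/-! ### Auxiliary development for Statement 4 -/

section Aux

set_option linter.unusedSectionVars false
set_option linter.unusedVariables false

variable {G}

open Walk

/-! #### Basic facts about `tPath` -/

lemma tPath_isPath (hG : G.IsTree) (u v : V) : (tPath G hG u v).IsPath :=
  (hG.existsUnique_path u v).exists.choose_spec

lemma tPath_eq (hG : G.IsTree) {u v : V} (p : G.Walk u v) (hp : p.IsPath) :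
    p = tPath G hG u v :=
  (hG.existsUnique_path u v).unique hp (tPath_isPath hG u v)

lemma tPath_self (hG : G.IsTree) (u : V) : tPath G hG u u = Walk.nil :=
  (tPath_eq hG Walk.nil IsPath.nil).symm

/-! #### Branches -/

lemma inO_iff (hG : G.IsTree) {x y z : V} :
    inO G x y z ↔ x ∉ (tPath G hG y z).support := by
  constructor
  · rintro ⟨p, hp⟩
    rw [← tPath_eq hG p.bypass p.bypass_isPath]
    exact fun hx => hp (p.support_bypass_subset hx)
  · intro h
    exact ⟨_, h⟩

lemma inO_symm {x y z : V} (h : inO G x y z) : inO G x z y := by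
  obtain ⟨p, hp⟩ := h
  exact ⟨p.reverse, by simpa [Walk.support_reverse] using hp⟩

lemma inO_trans {x a b c : V} (h₁ : inO G x a b) (h₂ : inO G x b c) : inO G x a c := by
  obtain ⟨p, hp⟩ := h₁
  obtain ⟨q, hq⟩ := h₂
  refine ⟨p.append q, ?_⟩
  rw [Walk.mem_support_append_iff]
  tauto

lemma inO_refl {x y : V} (h : y ≠ x) : inO G x y y :=
  ⟨Walk.nil, by simp [Ne.symm h]⟩

lemma mem_Bbr_self (x y : V) : x ∈ Bbr G x y :=
  fun ⟨p, hp⟩ => hp p.end_mem_support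

lemma not_mem_Bbr {u v : V} (h : u ≠ v) : u ∉ Bbr G v u :=
  fun hc => hc (inO_refl h)

lemma start_not_mem_tail {u z : V} {p : G.Walk u z} (hp : p.IsPath) :
    u ∉ p.support.tail := by
  have hnd := hp.support_nodup
  rw [p.support_eq_cons] at hnd
  exact (List.nodup_cons.mp hnd).1

lemma mem_tail_of_mem {l : List V} {a b : V} (hl : l ≠ []) (ha : a ∈ l)
    (hab : a ≠ l.head hl) : a ∈ l.tail := by
  rcases l with _ | ⟨c, l⟩
  · simp at ha
  · rcases List.mem_cons.mp ha with h | h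
    · exact absurd h hab
    · exact h

lemma start_not_mem_dropUntil_support {c z a : V} {p : G.Walk c z} (hp : p.IsPath)
    (ha : a ∈ p.support) (hac : a ≠ c) : c ∉ (p.dropUntil a ha).support := by
  intro hc
  have hnd : p.support.Nodup := hp.support_nodup
  rw [← p.take_spec ha, Walk.support_append] at hnd
  have h1 : c ∈ (p.takeUntil a ha).support := Walk.start_mem_support _
  have h2 : c ∈ (p.dropUntil a ha).support.tail := by
    have hcons := (p.dropUntil a ha).support_eq_cons
    rw [hcons] at hc
    rcases List.mem_cons.mp hc with h | h
    · exact absurd h (Ne.symm hac)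
    · exact h
  exact (List.nodup_append.mp hnd).2.2 c h1 c h2 rfl

lemma mem_Bbr_iff (hG : G.IsTree) {a b z : V} :
    z ∈ Bbr G a b ↔ a ∈ (tPath G hG b z).support := by
  rw [Bbr, Set.mem_setOf_eq, inO_iff hG, not_not]

lemma support_subset_Bbr (hG : G.IsTree) {u v z : V} (hz : z ∈ Bbr G u v) :
    ∀ y ∈ (tPath G hG u z).support, y ∈ Bbr G u v := by
  intro y hy hyO
  by_cases hyu : y = u
  · subst hyu
    exact mem_Bbr_self _ _ hyO
  · exact hz (inO_trans hyO
      ⟨(tPath G hG u z).dropUntil y hy,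
        start_not_mem_dropUntil_support (tPath_isPath hG u z) hy hyu⟩)

lemma mem_Bbr_compl (hG : G.IsTree) {u v z : V} (h : G.Adj u v) :
    z ∈ Bbr G v u ↔ z ∉ Bbr G u v := by
  constructor
  · intro hz hz'
    by_cases hv : v ∈ (tPath G hG u z).support
    · exact hz' ⟨(tPath G hG u z).dropUntil v hv,
        start_not_mem_dropUntil_support (tPath_isPath hG u z) hv h.ne'⟩
    · exact hz ⟨tPath G hG u z, hv⟩
  · intro hz hz'
    rw [Bbr, Set.mem_setOf_eq, not_not] at hz
    have hu : u ∉ (tPath G hG v z).support := (inO_iff hG).mp hz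
    have hcons : (Walk.cons h (tPath G hG v z)).IsPath :=
      (tPath_isPath hG v z).cons hu
    have := tPath_eq hG _ hcons
    have hv : v ∈ (tPath G hG u z).support := by
      rw [← this, Walk.support_cons]
      exact List.mem_cons_of_mem _ (Walk.start_mem_support _)
    exact ((inO_iff hG).mp hz') hv

lemma tPath_cons (hG : G.IsTree) {u v z : V} (h : G.Adj u v) (hz : z ∈ Bbr G v u) :
    tPath G hG u z = Walk.cons h (tPath G hG v z) := by
  have hu : u ∉ (tPath G hG v z).support := by
    intro hu
    exact not_mem_Bbr h.ne (support_subset_Bbr hG hz u hu)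
  exact (tPath_eq hG _ ((tPath_isPath hG v z).cons hu)).symm

lemma Bbr_subset (hG : G.IsTree) {a c d : V} (h : G.Adj a c) (ha : a ∈ Bbr G c d) :
    Bbr G a c ⊆ Bbr G c d := by
  intro z hz hinO
  obtain ⟨p, hp⟩ := hinO
  -- `p : walk d → z` avoiding `c`.  First, `a ∉ p.support`.
  have hap : a ∉ p.support := by
    intro hap
    exact ha ⟨p.takeUntil a hap, fun hc => hp ((p.support_takeUntil_subset hap) hc)⟩
  -- so `z` is reachable from `d` avoiding both `a` and `c`.
  -- On the other hand every walk from `c` to `z` passes through `a`.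
  have haz : a ∈ (tPath G hG c z).support := (mem_Bbr_iff hG).mp hz
  have hac : a ≠ c := h.ne
  have : inO G c z a := ⟨((tPath G hG c z).dropUntil a haz).reverse, by
      simpa [Walk.support_reverse] using
        start_not_mem_dropUntil_support (tPath_isPath hG c z) haz hac⟩
  exact ha (inO_trans ⟨p, hp⟩ this)

lemma Bbr_congr (hG : G.IsTree) {a b c : V} (h : inO G a b c) :
    Bbr G a b = Bbr G a c := by
  ext z
  constructor
  · intro hz hc
    exact hz (inO_trans h hc)
  · intro hz hb
    exact hz (inO_trans (inO_symm h) hb)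

/-! #### `parent` -/

lemma parent_mem_support (hG : G.IsTree) (u z : V) :
    parent G hG u z ∈ (tPath G hG u z).support :=
  Walk.mem_support_iff_exists_getVert.mpr ⟨_, rfl, Nat.sub_le _ _⟩

lemma parent_of_adj (hG : G.IsTree) {u z : V} (h : G.Adj u z) :
    parent G hG u z = u := by
  have hpath : (Walk.cons h Walk.nil).IsPath := by
    rw [Walk.cons_isPath_iff]
    exact ⟨IsPath.nil, by simp [h.ne]⟩
  have ht : tPath G hG u z = Walk.cons h Walk.nil := (tPath_eq hG _ hpath).symm
  rw [parent, ht]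
  simp

lemma getVert_ne_start {u z : V} {p : G.Walk u z} (hp : p.IsPath) {i : ℕ}
    (h1 : 1 ≤ i) (h2 : i ≤ p.length) : p.getVert i ≠ u := by
  cases p with
  | nil => simp at h2; omega
  | cons hadj q =>
    obtain ⟨j, rfl⟩ : ∃ j, i = j + 1 := ⟨i - 1, by omega⟩
    rw [Walk.getVert_cons_succ]
    intro hq
    have hmem : _ ∈ q.support := Walk.mem_support_iff_exists_getVert.mpr
      ⟨j, rfl, by simpa [Walk.length_cons] using Nat.le_of_succ_le_succ h2⟩
    rw [hq] at hmem
    exact ((Walk.cons_isPath_iff _ _).mp hp).2 hmem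

lemma adj_of_parent_eq (hG : G.IsTree) {u z : V} (hzu : z ≠ u)
    (hp : parent G hG u z = u) : G.Adj u z := by
  obtain ⟨y, h, q, hq⟩ := Walk.exists_eq_cons_of_ne (Ne.symm hzu) (tPath G hG u z)
  rw [parent, hq] at hp
  rcases Nat.eq_zero_or_pos q.length with h0 | h0
  · have : y = z := Walk.eq_of_length_eq_zero h0
    exact this ▸ h
  · exfalso
    have hpath : (Walk.cons h q).IsPath := hq ▸ tPath_isPath hG u z
    refine getVert_ne_start hpath (i := (Walk.cons h q).length - 1) ?_ ?_ hp
    · rw [Walk.length_cons]; omega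
    · omega

lemma parent_trans (hG : G.IsTree) {u v z : V} (h : G.Adj u v) (hz : z ∈ Bbr G v u)
    (hzv : z ≠ v) : parent G hG u z = parent G hG v z := by
  have hc := tPath_cons hG h hz
  have h0 : (tPath G hG v z).length ≠ 0 := by
    intro h0
    exact hzv (Walk.eq_of_length_eq_zero h0).symm
  rw [parent, parent, hc, Walk.length_cons, Nat.add_sub_cancel,
    Walk.getVert_cons _ _ h0]

/-! #### `second vertex is unique neighbour` -/

lemma not_adj_tail (hG : G.IsTree) {u y z : V} {hadj : G.Adj u y} {q : G.Walk y z}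
    (hp : (Walk.cons hadj q).IsPath) {t : V} (ht : t ∈ q.support.tail) :
    ¬ G.Adj u t := by
  intro hut
  have hq : q.IsPath := hp.of_cons
  have htq : t ∈ q.support := List.mem_of_mem_tail ht
  have hty : t ≠ y := by
    intro h
    exact start_not_mem_tail hq (h ▸ ht)
  have hu : u ∉ q.support := ((Walk.cons_isPath_iff _ _).mp hp).2
  have htu : t ≠ u := fun h => hu (h ▸ htq)
  -- two distinct paths from u to t
  have hp1 : (Walk.cons hadj (q.takeUntil t htq)).IsPath :=
    (hq.takeUntil htq).cons (fun hc => hu (q.support_takeUntil_subset htq hc))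
  have hp2 : (Walk.cons hut Walk.nil).IsPath := by
    rw [Walk.cons_isPath_iff]
    exact ⟨IsPath.nil, by simp [Ne.symm htu]⟩
  have := (tPath_eq hG _ hp1).trans (tPath_eq hG _ hp2).symm
  have hlen := congrArg Walk.length this
  simp only [Walk.length_cons, Walk.length_nil] at hlen
  have hlen0 : (q.takeUntil t htq).length = 0 := by omega
  exact hty (Walk.eq_of_length_eq_zero hlen0).symm

/-! #### `recvTime` computations -/

variable {w : V → V → ℝ} {ρ : ℝ}

lemma recvTime_self (hG : G.IsTree) (σ : V → ℕ) (u : V) :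
    recvTime G hG w ρ σ u u = 0 := by
  rw [recvTime, tPath_self]
  simp

lemma recv_congr (hG : G.IsTree) {σ σ' : V → ℕ} {u z : V}
    (h : ∀ y ∈ (tPath G hG u z).support.tail, σ y = σ' y) :
    recvTime G hG w ρ σ u z = recvTime G hG w ρ σ' u z := by
  unfold recvTime
  congr 1
  apply List.map_congr_left
  intro d hd
  have hmem : d.toProd.2 ∈ (tPath G hG u z).support.tail := by
    rw [← Walk.map_snd_darts]
    exact List.mem_map_of_mem hd
  rw [h _ hmem]

lemma recv_cons (hG : G.IsTree) {u v z : V} (h : G.Adj u v) (hz : z ∈ Bbr G v u)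
    (σ : V → ℕ) :
    recvTime G hG w ρ σ u z = σ v * ρ + w u v + recvTime G hG w ρ σ v z := by
  rw [recvTime, tPath_cons hG h hz, recvTime]
  simp [add_assoc]

lemma recv_shift (hG : G.IsTree) {u v z : V} (h : G.Adj u v) (hzB : z ∈ Bbr G u v)
    (hzu : z ≠ u) {σ σ₁ : V → ℕ}
    (hhead : ∀ y, G.Adj u y → y ∈ Bbr G u v → σ y = σ₁ y + 1)
    (hrest : ∀ y, y ∈ Bbr G u v → ¬ G.Adj u y → σ y = σ₁ y) :
    recvTime G hG w ρ σ u z = recvTime G hG w ρ σ₁ u z + ρ := by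
  obtain ⟨y, hadj, q, hpq⟩ := Walk.exists_eq_cons_of_ne (Ne.symm hzu) (tPath G hG u z)
  have hpath : (Walk.cons hadj q).IsPath := hpq ▸ tPath_isPath hG u z
  have hsub : ∀ t ∈ (Walk.cons hadj q).support, t ∈ Bbr G u v := by
    intro t htm
    exact support_subset_Bbr hG hzB t (hpq ▸ htm)
  have hyB : y ∈ Bbr G u v := hsub y (by simp [Walk.support_cons])
  have htail : ∀ d ∈ q.darts, σ d.toProd.2 = σ₁ d.toProd.2 := by
    intro d hd
    have ht : d.toProd.2 ∈ q.support.tail := by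
      rw [← Walk.map_snd_darts]
      exact List.mem_map_of_mem hd
    refine hrest _ (hsub _ ?_) (not_adj_tail hG hpath ht)
    rw [Walk.support_cons]
    exact List.mem_cons_of_mem _ (List.mem_of_mem_tail ht)
  rw [recvTime, recvTime, hpq]
  simp only [Walk.darts_cons, List.map_cons, List.sum_cons]
  have hsum : (q.darts.map (fun d => (σ d.toProd.2 : ℝ) * ρ + w d.toProd.1 d.toProd.2)).sum
      = (q.darts.map (fun d => (σ₁ d.toProd.2 : ℝ) * ρ + w d.toProd.1 d.toProd.2)).sum := by
    congr 1
    apply List.map_congr_left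
    intro d hd
    rw [htail d hd]
  rw [hsum, hhead y hadj hyB]
  push_cast
  ring

/-! #### `hop` and `pw` -/

lemma hop_cons (hG : G.IsTree) {u v z : V} (h : G.Adj u v) (hz : z ∈ Bbr G v u) :
    hop G hG u z = hop G hG v z + 1 := by
  rw [hop, hop, tPath_cons hG h hz, Walk.length_cons]

lemma pw_cons (hG : G.IsTree) {u v z : V} (h : G.Adj u v) (hz : z ∈ Bbr G v u) :
    pw G hG w u z = w u v + pw G hG w v z := by
  rw [pw, pw, tPath_cons hG h hz]
  simp

lemma hop_pos (hG : G.IsTree) {u z : V} (huz : u ≠ z) : 1 ≤ hop G hG u z :=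
  Nat.one_le_iff_ne_zero.mpr fun h0 => huz (Walk.eq_of_length_eq_zero h0)

lemma hop_self (hG : G.IsTree) (u : V) : hop G hG u u = 0 := by
  rw [hop, tPath_self]; rfl

lemma pw_self (hG : G.IsTree) (u : V) : pw G hG w u u = 0 := by
  rw [pw, tPath_self]; rfl

lemma pw_nonneg (hG : G.IsTree) (hpos : Wpos G w) (u z : V) : 0 ≤ pw G hG w u z := by
  apply List.sum_nonneg
  intro r hr
  obtain ⟨d, _, rfl⟩ := List.mem_map.mp hr
  exact (hpos _ _ d.adj).le

/-! #### `bTime` infrastructure -/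

lemma exists_valid (hG : G.IsTree) (u : V) (S : Set V) :
    ∃ σ : V → ℕ, Valid G hG σ u S := by
  refine ⟨fun z => (Fintype.equivFin V z : ℕ) + 1, fun z _ _ => Nat.le_add_left 1 _, ?_⟩
  intro z₁ _ z₂ _ _ _ hne _ hσ
  exact absurd ((Fintype.equivFin V).injective (Fin.val_injective
    (Nat.add_right_cancel hσ))) hne

lemma recv_le_sSup (hG : G.IsTree) {σ : V → ℕ} {u z : V} {S : Set V} (hz : z ∈ S) :
    recvTime G hG w ρ σ u z ≤ sSup ((recvTime G hG w ρ σ u) '' S) :=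
  le_csSup ((S.toFinite.image _).bddAbove) ⟨z, hz, rfl⟩

lemma sSup_recv_nonneg (hG : G.IsTree) {σ : V → ℕ} {u : V} {S : Set V} (hu : u ∈ S) :
    0 ≤ sSup ((recvTime G hG w ρ σ u) '' S) := by
  have h := recv_le_sSup (w := w) (ρ := ρ) hG (σ := σ) (u := u) (z := u) hu
  rwa [recvTime_self] at h

lemma bTime_le_sSup (hG : G.IsTree) {σ : V → ℕ} {u : V} {S : Set V} (hu : u ∈ S)
    (hσ : Valid G hG σ u S) :
    bTime G hG w ρ u S ≤ sSup ((recvTime G hG w ρ σ u) '' S) := by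
  rw [bTime]
  apply csInf_le
  · refine ⟨0, ?_⟩
    rintro m ⟨σ', hσ', rfl⟩
    exact sSup_recv_nonneg hG hu
  · exact ⟨σ, hσ, rfl⟩

lemma le_bTime (hG : G.IsTree) {u : V} {S : Set V} {c : ℝ}
    (h : ∀ σ, Valid G hG σ u S → c ≤ sSup ((recvTime G hG w ρ σ u) '' S)) :
    c ≤ bTime G hG w ρ u S := by
  rw [bTime]
  apply le_csInf
  · obtain ⟨σ, hσ⟩ := exists_valid hG u S
    exact ⟨_, σ, hσ, rfl⟩
  · rintro m ⟨σ, hσ, rfl⟩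
    exact h σ hσ

lemma bTime_nonneg (hG : G.IsTree) {u : V} {S : Set V} (hu : u ∈ S) :
    0 ≤ bTime G hG w ρ u S :=
  le_bTime hG fun _ _ => sSup_recv_nonneg hG hu

lemma Valid.mono {hG : G.IsTree} {σ : V → ℕ} {u : V} {S₁ S₂ : Set V}
    (h : Valid G hG σ u S₂) (hS : S₁ ⊆ S₂) : Valid G hG σ u S₁ :=
  ⟨fun z hz => h.1 z (hS hz), fun z₁ h₁ z₂ h₂ => h.2 z₁ (hS h₁) z₂ (hS h₂)⟩

lemma bTime_mono (hG : G.IsTree) {u : V} {S₁ S₂ : Set V} (hu : u ∈ S₁) (hS : S₁ ⊆ S₂) :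
    bTime G hG w ρ u S₁ ≤ bTime G hG w ρ u S₂ := by
  apply le_bTime hG
  intro σ hσ
  calc bTime G hG w ρ u S₁ ≤ sSup ((recvTime G hG w ρ σ u) '' S₁) :=
      bTime_le_sSup hG hu (hσ.mono hS)
    _ ≤ sSup ((recvTime G hG w ρ σ u) '' S₂) :=
      csSup_le_csSup ((S₂.toFinite.image _).bddAbove) ⟨_, ⟨u, hu, rfl⟩⟩
        (Set.image_mono hS)

lemma exists_near_opt (hG : G.IsTree) {u : V} {S : Set V} (hu : u ∈ S) {ε : ℝ}
    (hε : 0 < ε) :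
    ∃ σ, Valid G hG σ u S ∧
      sSup ((recvTime G hG w ρ σ u) '' S) < bTime G hG w ρ u S + ε := by
  have hne : {m | ∃ σ, Valid G hG σ u S ∧
      m = sSup ((recvTime G hG w ρ σ u) '' S)}.Nonempty := by
    obtain ⟨σ, hσ⟩ := exists_valid hG u S
    exact ⟨_, σ, hσ, rfl⟩
  have hlt : sInf {m | ∃ σ, Valid G hG σ u S ∧
      m = sSup ((recvTime G hG w ρ σ u) '' S)} < bTime G hG w ρ u S + ε := by
    rw [← bTime]
    linarith
  obtain ⟨m, hm, hmlt⟩ := exists_lt_of_csInf_lt hne hlt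
  obtain ⟨σ, hσ, rfl⟩ := hm
  exact ⟨σ, hσ, hmlt⟩

lemma le_of_forall_pos_le_add' {a b : ℝ} (h : ∀ ε : ℝ, 0 < ε → a ≤ b + ε) : a ≤ b := by
  by_contra hc
  push_neg at hc
  have := h ((a - b) / 2) (by linarith)
  linarith

/-! #### The two key schedule lemmas -/

lemma adj_lower (hG : G.IsTree) (hρ : 0 < ρ) {u v : V} (h : G.Adj u v) {S : Set V}
    (hS : Bbr G v u ⊆ S) :
    ρ + w u v + bTime G hG w ρ v (Bbr G v u) ≤ bTime G hG w ρ u S := by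
  apply le_bTime hG
  intro σ hσ
  have hvS : v ∈ S := hS (mem_Bbr_self v u)
  have hσv : 1 ≤ σ v := hσ.1 v hvS h.ne'
  have hvalid : Valid G hG σ v (Bbr G v u) := by
    constructor
    · intro z hz hzv
      exact hσ.1 z (hS hz) fun hzu => not_mem_Bbr h.ne (hzu ▸ hz)
    · intro z₁ h₁ z₂ h₂ hz₁ hz₂ hne hpar
      refine hσ.2 z₁ (hS h₁) z₂ (hS h₂) ?_ ?_ hne ?_
      · exact fun hzu => not_mem_Bbr h.ne (hzu ▸ h₁)
      · exact fun hzu => not_mem_Bbr h.ne (hzu ▸ h₂)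
      · rw [parent_trans hG h h₁ hz₁, parent_trans hG h h₂ hz₂]
        exact hpar
  have h1 : bTime G hG w ρ v (Bbr G v u)
      ≤ sSup ((recvTime G hG w ρ σ v) '' Bbr G v u) :=
    bTime_le_sSup hG (mem_Bbr_self v u) hvalid
  have h2 : sSup ((recvTime G hG w ρ σ v) '' Bbr G v u)
      ≤ sSup ((recvTime G hG w ρ σ u) '' S) - (ρ + w u v) := by
    apply csSup_le (Set.Nonempty.image _ ⟨v, mem_Bbr_self v u⟩)
    rintro r ⟨z, hz, rfl⟩
    have hd := recv_cons (w := w) (ρ := ρ) hG h hz σ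
    have hup : recvTime G hG w ρ σ u z ≤ sSup ((recvTime G hG w ρ σ u) '' S) :=
      recv_le_sSup hG (hS hz)
    have hcast : (1 : ℝ) ≤ (σ v : ℝ) := by exact_mod_cast hσv
    have hmul : ρ ≤ (σ v : ℝ) * ρ := by nlinarith
    linarith
  linarith

lemma adj_upper (hG : G.IsTree) (hρ : 0 < ρ) {u v : V} (h : G.Adj u v) {S : Set V}
    (huS : u ∈ S) (hvS : v ∈ S) :
    bTime G hG w ρ u S ≤
      max (ρ + bTime G hG w ρ u (S ∩ Bbr G u v))
        (ρ + w u v + bTime G hG w ρ v (S ∩ Bbr G v u)) := by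
  apply le_of_forall_pos_le_add'
  intro ε hε
  obtain ⟨σ₁, hσ₁, hs₁⟩ :=
    exists_near_opt (w := w) (ρ := ρ) hG (S := S ∩ Bbr G u v) ⟨huS, mem_Bbr_self u v⟩ hε
  obtain ⟨σ₂, hσ₂, hs₂⟩ :=
    exists_near_opt (w := w) (ρ := ρ) hG (S := S ∩ Bbr G v u) ⟨hvS, mem_Bbr_self v u⟩ hε
  set A := ρ + bTime G hG w ρ u (S ∩ Bbr G u v) with hA
  set B := ρ + w u v + bTime G hG w ρ v (S ∩ Bbr G v u) with hB
  set σ : V → ℕ := fun z =>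
    if z ∈ Bbr G v u then (if z = v then 1 else σ₂ z)
    else σ₁ z + (if G.Adj u z then 1 else 0) with hσdef
  have hcompl : ∀ z : V, z ∈ Bbr G v u ↔ z ∉ Bbr G u v := fun z => mem_Bbr_compl hG h
  have huB : u ∉ Bbr G v u := not_mem_Bbr h.ne
  have hσu : ∀ z, z ∈ Bbr G u v → σ z = σ₁ z + (if G.Adj u z then 1 else 0) := by
    intro z hz
    have hznB : z ∉ Bbr G v u := fun hc => ((hcompl z).mp hc) hz
    simp [hσdef, hznB]
  have hσv : σ v = 1 := by simp [hσdef, mem_Bbr_self v u]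
  have hσ₂' : ∀ z, z ∈ Bbr G v u → z ≠ v → σ z = σ₂ z := by
    intro z hz hzv
    simp [hσdef, hz, hzv]
  have hparu : ∀ z, z ∈ Bbr G u v → parent G hG u z ∈ Bbr G u v := by
    intro z hz
    exact support_subset_Bbr hG hz _ (parent_mem_support hG u z)
  have hparv : ∀ z, z ∈ Bbr G v u → z ≠ v → parent G hG u z ∈ Bbr G v u := by
    intro z hz hzv
    rw [parent_trans hG h hz hzv]
    exact support_subset_Bbr hG hz _ (parent_mem_support hG v z)
  have hval : Valid G hG σ u S := by
    constructor
    · intro z hzS hzu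
      by_cases hzB : z ∈ Bbr G v u
      · by_cases hzv : z = v
        · rw [hzv, hσv]
        · rw [hσ₂' z hzB hzv]
          exact hσ₂.1 z ⟨hzS, hzB⟩ hzv
      · have hz' : z ∈ Bbr G u v := by
          by_contra hc
          exact hzB ((hcompl z).mpr hc)
        rw [hσu z hz']
        exact le_trans (hσ₁.1 z ⟨hzS, hz'⟩ hzu) (Nat.le_add_right _ _)
    · intro z₁ hz₁S z₂ hz₂S hz₁u hz₂u hne hpar
      by_cases hb₁ : z₁ ∈ Bbr G v u
      · by_cases hb₂ : z₂ ∈ Bbr G v u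
        · -- both on the v-side
          by_cases h1v : z₁ = v
          · have h2v : z₂ ≠ v := fun hc => hne (h1v.trans hc.symm)
            have hp2 := hparv z₂ hb₂ h2v
            rw [← hpar, h1v, parent_of_adj hG h] at hp2
            exact absurd hp2 huB
          · by_cases h2v : z₂ = v
            · have hp1 := hparv z₁ hb₁ h1v
              rw [hpar, h2v, parent_of_adj hG h] at hp1
              exact absurd hp1 huB
            · rw [hσ₂' z₁ hb₁ h1v, hσ₂' z₂ hb₂ h2v]
              refine hσ₂.2 z₁ ⟨hz₁S, hb₁⟩ z₂ ⟨hz₂S, hb₂⟩ h1v h2v hne ?_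
              rw [← parent_trans hG h hb₁ h1v, ← parent_trans hG h hb₂ h2v]
              exact hpar
        · -- z₁ on the v-side, z₂ on the u-side
          have hz₂' : z₂ ∈ Bbr G u v := by
            by_contra hc
            exact hb₂ ((hcompl z₂).mpr hc)
          by_cases h1v : z₁ = v
          · have hpu : parent G hG u z₂ = u := by
              rw [← hpar, h1v, parent_of_adj hG h]
            have hadj2 : G.Adj u z₂ := adj_of_parent_eq hG hz₂u hpu
            have hge := hσ₁.1 z₂ ⟨hz₂S, hz₂'⟩ hz₂u
            rw [h1v, hσv, hσu z₂ hz₂', if_pos hadj2]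
            omega
          · exfalso
            have hp1 := hparv z₁ hb₁ h1v
            have hp2 := hparu z₂ hz₂'
            rw [hpar] at hp1
            exact ((hcompl _).mp hp1) hp2
      · by_cases hb₂ : z₂ ∈ Bbr G v u
        · -- z₁ on the u-side, z₂ on the v-side
          have hz₁' : z₁ ∈ Bbr G u v := by
            by_contra hc
            exact hb₁ ((hcompl z₁).mpr hc)
          by_cases h2v : z₂ = v
          · have hpu : parent G hG u z₁ = u := by
              rw [hpar, h2v, parent_of_adj hG h]
            have hadj1 : G.Adj u z₁ := adj_of_parent_eq hG hz₁u hpu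
            have hge := hσ₁.1 z₁ ⟨hz₁S, hz₁'⟩ hz₁u
            rw [h2v, hσv, hσu z₁ hz₁', if_pos hadj1]
            omega
          · exfalso
            have hp2 := hparv z₂ hb₂ h2v
            have hp1 := hparu z₁ hz₁'
            rw [← hpar] at hp2
            exact ((hcompl _).mp hp2) hp1
        · -- both on the u-side
          have hz₁' : z₁ ∈ Bbr G u v := by
            by_contra hc
            exact hb₁ ((hcompl z₁).mpr hc)
          have hz₂' : z₂ ∈ Bbr G u v := by
            by_contra hc
            exact hb₂ ((hcompl z₂).mpr hc)
          have hd := hσ₁.2 z₁ ⟨hz₁S, hz₁'⟩ z₂ ⟨hz₂S, hz₂'⟩ hz₁u hz₂u hne hpar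
          rw [hσu z₁ hz₁', hσu z₂ hz₂']
          by_cases ha1 : G.Adj u z₁
          · by_cases ha2 : G.Adj u z₂
            · rw [if_pos ha1, if_pos ha2]
              omega
            · exfalso
              exact ha2 (adj_of_parent_eq hG hz₂u (by rw [← hpar, parent_of_adj hG ha1]))
          · by_cases ha2 : G.Adj u z₂
            · exfalso
              exact ha1 (adj_of_parent_eq hG hz₁u (by rw [hpar, parent_of_adj hG ha2]))
            · rw [if_neg ha1, if_neg ha2]
              omega
  have hrecv : ∀ z ∈ S, recvTime G hG w ρ σ u z ≤ max A B + ε := by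
    intro z hzS
    by_cases hzu : z = u
    · rw [hzu, recvTime_self]
      have h0 : 0 ≤ bTime G hG w ρ u (S ∩ Bbr G u v) :=
        bTime_nonneg hG ⟨huS, mem_Bbr_self u v⟩
      have hAm := le_max_left A B
      rw [hA] at hAm
      linarith
    · by_cases hzB : z ∈ Bbr G v u
      · have hr1 := recv_cons (w := w) (ρ := ρ) hG h hzB σ
        have hr2 : recvTime G hG w ρ σ v z = recvTime G hG w ρ σ₂ v z := by
          apply recv_congr hG
          intro t ht
          have htv : t ≠ v := fun hc =>
            start_not_mem_tail (tPath_isPath hG v z) (hc ▸ ht)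
          have htB : t ∈ Bbr G v u :=
            support_subset_Bbr hG hzB t (List.mem_of_mem_tail ht)
          exact hσ₂' t htB htv
        have hr3 : recvTime G hG w ρ σ₂ v z
            ≤ sSup ((recvTime G hG w ρ σ₂ v) '' (S ∩ Bbr G v u)) :=
          recv_le_sSup hG ⟨hzS, hzB⟩
        have hBm := le_max_right A B
        rw [hB] at hBm
        rw [hr1, hr2, hσv]
        push_cast
        linarith
      · have hz' : z ∈ Bbr G u v := by
          by_contra hc
          exact hzB ((hcompl z).mpr hc)
        have hr : recvTime G hG w ρ σ u z = recvTime G hG w ρ σ₁ u z + ρ := by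
          apply recv_shift hG h hz' hzu
          · intro y hy hyB
            rw [hσu y hyB, if_pos hy]
          · intro y hyB hy
            rw [hσu y hyB, if_neg hy]
            omega
        have hr3 : recvTime G hG w ρ σ₁ u z
            ≤ sSup ((recvTime G hG w ρ σ₁ u) '' (S ∩ Bbr G u v)) :=
          recv_le_sSup hG ⟨hzS, hz'⟩
        have hAm := le_max_left A B
        rw [hA] at hAm
        rw [hr]
        linarith
  have hsup : sSup ((recvTime G hG w ρ σ u) '' S) ≤ max A B + ε := by
    apply csSup_le (Set.Nonempty.image _ ⟨u, huS⟩)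
    rintro r ⟨z, hz, rfl⟩
    exact hrecv z hz
  exact le_trans (bTime_le_sSup hG huS hval) hsup

/-! #### The chain inequality -/

lemma chain (hG : G.IsTree) (hρ : 0 < ρ) (hpos : Wpos G w) {κ : V}
    (hκ : IsPrime G hG w ρ κ) :
    ∀ n : ℕ, ∀ x y : V, G.Adj x y → inO G x y κ → hop G hG x κ ≤ n →
      bTime G hG w ρ x (Bbr G x y) ≤ bTime G hG w ρ κ (Bbr G κ x) := by
  intro n
  induction n with
  | zero =>
    intro x y hxy hinO hhop
    exfalso
    have hx : x = κ := Walk.eq_of_length_eq_zero (Nat.le_zero.mp hhop)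
    subst hx
    obtain ⟨p, hp⟩ := hinO
    exact hp p.end_mem_support
  | succ n ih =>
    intro x y hxy hinO hhop
    by_cases hyκ : y = κ
    · subst hyκ
      exact hκ.2 x hxy.symm
    · have hκB : κ ∈ Bbr G y x := (mem_Bbr_compl hG hxy).mpr fun hc => hc hinO
      obtain ⟨y', hadj', q', hq'⟩ := Walk.exists_eq_cons_of_ne hyκ (tPath G hG y κ)
      have hcons : (Walk.cons hadj' q').IsPath := hq' ▸ tPath_isPath hG y κ
      have hynot : y ∉ q'.support := ((Walk.cons_isPath_iff _ _).mp hcons).2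
      have hinO' : inO G y y' κ := ⟨q', hynot⟩
      have hxyy' : x ∈ Bbr G y y' := fun hcon =>
        hκB (inO_trans (inO_symm hcon) hinO')
      have hhopy : hop G hG y κ ≤ n := by
        have := hop_cons hG hxy hκB
        omega
      have hih := ih y y' hadj' hinO' hhopy
      have hsub : Bbr G x y ⊆ Bbr G y y' := Bbr_subset hG hxy hxyy'
      have hlow := adj_lower (w := w) hG hρ hxy.symm (S := Bbr G y y') hsub
      have hκx : κ ≠ x := by
        intro hc
        subst hc
        exact (not_mem_Bbr (Ne.symm hyκ) hκB : False)
      have hBeq : Bbr G κ y = Bbr G κ x :=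
        Bbr_congr hG ⟨Walk.cons hxy.symm Walk.nil, by
          simp [Walk.support_cons, Ne.symm hyκ, hκx]⟩
      rw [hBeq] at hih
      have hwyx : 0 < w y x := hpos y x hxy.symm
      linarith

/-! #### Main induction: upper and lower bounds -/

lemma lb_aux (hG : G.IsTree) (hρ : 0 < ρ) {κ : V} :
    ∀ n : ℕ, ∀ x : V, ∀ S : Set V, x ≠ κ → Obr G x κ ⊆ S → hop G hG x κ ≤ n →
      (hop G hG x κ : ℝ) * ρ + pw G hG w x κ + bTime G hG w ρ κ (Bbr G κ x)
        ≤ bTime G hG w ρ x S := by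
  intro n
  induction n with
  | zero =>
    intro x S hxκ _ hhop
    exact absurd (Nat.le_zero.mp hhop) (by have := hop_pos hG hxκ; omega)
  | succ n ih =>
    intro x S hxκ hOS hhop
    obtain ⟨y, hxy, q, hq⟩ := Walk.exists_eq_cons_of_ne hxκ (tPath G hG x κ)
    have hcons : (Walk.cons hxy q).IsPath := hq ▸ tPath_isPath hG x κ
    have hxnot : x ∉ q.support := ((Walk.cons_isPath_iff _ _).mp hcons).2
    have hinO : inO G x y κ := ⟨q, hxnot⟩
    have hκB : κ ∈ Bbr G y x := (mem_Bbr_compl hG hxy).mpr fun hc => hc hinO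
    have hBOb : Bbr G y x = Obr G x κ := by
      ext z
      have h1 := mem_Bbr_compl (z := z) hG hxy
      constructor
      · intro hz
        have h2 : inO G x y z := by
          have h3 := h1.mp hz
          rwa [Bbr, Set.mem_setOf_eq, not_not] at h3
        exact inO_trans (inO_symm hinO) h2
      · intro hz
        apply h1.mpr
        intro hcon
        exact hcon (inO_trans hinO hz)
    have hsubS : Bbr G y x ⊆ S := hBOb ▸ hOS
    have hlow := adj_lower (w := w) hG hρ hxy (S := S) hsubS
    have hhops := hop_cons hG hxy hκB
    have hpws := pw_cons (w := w) hG hxy hκB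
    by_cases hyκ : y = κ
    · subst hyκ
      rw [hhops, hpws, hop_self hG, pw_self hG]
      push_cast
      linarith
    · have hOsub : Obr G y κ ⊆ Bbr G y x := by
        intro z hz hcon
        exact hκB (inO_trans hcon (inO_symm hz))
      have hih := ih y (Bbr G y x) hyκ hOsub (by omega)
      have hκx : κ ≠ x := Ne.symm hxκ
      have hBeq : Bbr G κ y = Bbr G κ x :=
        Bbr_congr hG ⟨Walk.cons hxy.symm Walk.nil, by
          simp [Walk.support_cons, Ne.symm hyκ, hκx]⟩
      rw [hBeq] at hih
      rw [hhops, hpws]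
      push_cast
      linarith

lemma ub_aux (hG : G.IsTree) (hρ : 0 < ρ) (hpos : Wpos G w) {κ : V}
    (hκ : IsPrime G hG w ρ κ) :
    ∀ n : ℕ, ∀ x : V, ∀ S : Set V, x ≠ κ → x ∈ S → Obr G x κ ⊆ S →
      hop G hG x κ ≤ n →
      bTime G hG w ρ x S
        ≤ (hop G hG x κ : ℝ) * ρ + pw G hG w x κ + bTime G hG w ρ κ (Bbr G κ x) := by
  intro n
  induction n with
  | zero =>
    intro x S hxκ _ _ hhop
    exact absurd (Nat.le_zero.mp hhop) (by have := hop_pos hG hxκ; omega)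
  | succ n ih =>
    intro x S hxκ hxS hOS hhop
    obtain ⟨y, hxy, q, hq⟩ := Walk.exists_eq_cons_of_ne hxκ (tPath G hG x κ)
    have hcons : (Walk.cons hxy q).IsPath := hq ▸ tPath_isPath hG x κ
    have hxnot : x ∉ q.support := ((Walk.cons_isPath_iff _ _).mp hcons).2
    have hinO : inO G x y κ := ⟨q, hxnot⟩
    have hκB : κ ∈ Bbr G y x := (mem_Bbr_compl hG hxy).mpr fun hc => hc hinO
    have hBOb : Bbr G y x = Obr G x κ := by
      ext z
      have h1 := mem_Bbr_compl (z := z) hG hxy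
      constructor
      · intro hz
        have h2 : inO G x y z := by
          have h3 := h1.mp hz
          rwa [Bbr, Set.mem_setOf_eq, not_not] at h3
        exact inO_trans (inO_symm hinO) h2
      · intro hz
        apply h1.mpr
        intro hcon
        exact hcon (inO_trans hinO hz)
    have hsubS : Bbr G y x ⊆ S := hBOb ▸ hOS
    have hyS : y ∈ S := hsubS (mem_Bbr_self y x)
    have hup := adj_upper (w := w) hG hρ hxy hxS hyS
    have hinter : S ∩ Bbr G y x = Bbr G y x := Set.inter_eq_self_of_subset_right hsubS
    rw [hinter] at hup
    have hhops := hop_cons hG hxy hκB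
    have hpws := pw_cons (w := w) hG hxy hκB
    -- the first arm of the max
    have harm1 : ρ + bTime G hG w ρ x (S ∩ Bbr G x y)
        ≤ (hop G hG x κ : ℝ) * ρ + pw G hG w x κ + bTime G hG w ρ κ (Bbr G κ x) := by
      have hm : bTime G hG w ρ x (S ∩ Bbr G x y) ≤ bTime G hG w ρ x (Bbr G x y) :=
        bTime_mono hG ⟨hxS, mem_Bbr_self x y⟩ Set.inter_subset_right
      have hch := chain (w := w) hG hρ hpos hκ (n + 1) x y hxy hinO hhop
      have h1 : (1 : ℝ) ≤ (hop G hG x κ : ℝ) := by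
        exact_mod_cast hop_pos hG hxκ
      have h2 := pw_nonneg (w := w) hG hpos x κ
      have hmul : ρ ≤ (hop G hG x κ : ℝ) * ρ := by nlinarith
      linarith
    -- the second arm of the max
    have harm2 : ρ + w x y + bTime G hG w ρ y (Bbr G y x)
        ≤ (hop G hG x κ : ℝ) * ρ + pw G hG w x κ + bTime G hG w ρ κ (Bbr G κ x) := by
      by_cases hyκ : y = κ
      · subst hyκ
        rw [hhops, hpws, hop_self hG, pw_self hG]
        push_cast
        linarith
      · have hOsub : Obr G y κ ⊆ Bbr G y x := by
          intro z hz hcon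
          exact hκB (inO_trans hcon (inO_symm hz))
        have hih := ih y (Bbr G y x) hyκ (mem_Bbr_self y x) hOsub (by omega)
        have hκx : κ ≠ x := Ne.symm hxκ
        have hBeq : Bbr G κ y = Bbr G κ x :=
          Bbr_congr hG ⟨Walk.cons hxy.symm Walk.nil, by
            simp [Walk.support_cons, Ne.symm hyκ, hκx]⟩
        rw [hBeq] at hih
        rw [hhops, hpws]
        push_cast
        linarith
    exact le_trans hup (max_le harm1 harm2)

end Aux

/-- If `κ̂` is a prime broadcast center, then for every `x ≠ κ̂`,
`b_time(x,T) = d(x,κ̂)·ρ + w̃(x,κ̂) + b_time(κ̂, B(κ̂,x))`. -/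
theorem stmt4 {V : Type*} [Fintype V] [DecidableEq V] (G : SimpleGraph V) (hG : G.IsTree)
    (w : V → V → ℝ) (hsym : Wsymm w) (hpos : Wpos G w) (ρ : ℝ) (hρ : 0 < ρ)
    (κ : V) (hκ : IsPrime G hG w ρ κ) (x : V) (hx : x ≠ κ) :
    bTimeT G hG w ρ x
      = (hop G hG x κ : ℝ) * ρ + pw G hG w x κ + bTime G hG w ρ κ (Bbr G κ x) := by
  have h1 := ub_aux (w := w) hG hρ hpos hκ (hop G hG x κ) x Set.univ hx
    (Set.mem_univ x) (Set.subset_univ _) le_rfl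
  have h2 := lb_aux (w := w) hG hρ (κ := κ) (hop G hG x κ) x Set.univ hx
    (Set.subset_univ _) le_rfl
  rw [bTimeT]
  exact le_antisymm h1 h2

end Postal
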